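/- Let A be a commutative ring, p a prime number and d ∈ A. Assume that p and d are nonzerodivisors on A, that A/dA is p-torsion-free, and that A is classically p-adically complete. Then the canonical ring homomorphism A → (A[1/d])^∧_p from A to the p-adic completion of A[1/d] is injective, and the reduction map A[1/d]/p·A[1/d] → (A[1/d])^∧_p / p·(A[1/d])^∧_p is an isomorphism. -/

import Mathlib

open AdicCompletion

section AuxLemmas

variable {A : Type*} [CommRing A] (p : ℕ) (d : A)

/-- `d` is a nonzerodivisor modulo `pⁿ`. -/
theorem aux_d_cancel (hdA : d ∈ nonZeroDivisors A)
    (htf : ∀ x : A, (p : A) * x ∈ Ideal.span {d} → x ∈ Ideal.span {d}) :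
    ∀ (n : ℕ) (x : A), (p : A) ^ n ∣ d * x → (p : A) ^ n ∣ x := by
  intro n
  induction n with
  | zero => intro x _; simpa using one_dvd x
  | succ n ih =>
    intro x ⟨y, hy⟩
    have h1 : (p : A) * ((p : A) ^ n * y) ∈ Ideal.span {d} := by
      rw [← mul_assoc, ← pow_succ']
      exact hy ▸ Ideal.mem_span_singleton.2 ⟨x, rfl⟩
    obtain ⟨y', hy'⟩ := Ideal.mem_span_singleton.1 (htf _ h1)
    have h2 : (x - (p : A) * y') * d = 0 := by
      have h3 : d * x = d * ((p : A) * y') := by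
        rw [hy, pow_succ', mul_assoc, hy']; ring
      linear_combination h3
    have hx : x = (p : A) * y' := sub_eq_zero.1 (mem_nonZeroDivisors_iff_right.1 hdA _ h2)
    obtain ⟨z, hz⟩ := ih y' ⟨y, by rw [hy', mul_comm]⟩
    exact ⟨z, by rw [hx, hz, pow_succ']; ring⟩

/-- Powers of `d` are nonzerodivisors modulo `pⁿ`. -/
theorem aux_dpow_cancel (hdA : d ∈ nonZeroDivisors A)
    (htf : ∀ x : A, (p : A) * x ∈ Ideal.span {d} → x ∈ Ideal.span {d}) :
    ∀ (k n : ℕ) (x : A), (p : A) ^ n ∣ d ^ k * x → (p : A) ^ n ∣ x := by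
  intro k
  induction k with
  | zero => intro n x h; simpa using h
  | succ k ih =>
    intro n x h
    rw [pow_succ, mul_comm (d ^ k) d, mul_assoc] at h
    exact ih n x (aux_d_cancel p d hdA htf n _ h)

/-- `pⁿ A[1/d] ∩ A = pⁿ A`. -/
theorem aux_loc (hdp : ∀ k n (x : A), (p : A) ^ n ∣ d ^ k * x → (p : A) ^ n ∣ x)
    (n : ℕ) (a : A)
    (h : (p : Localization.Away d) ^ n ∣ algebraMap A (Localization.Away d) a) :
    (p : A) ^ n ∣ a := by
  obtain ⟨b, hb⟩ := h
  obtain ⟨⟨a', s⟩, hs⟩ := IsLocalization.surj (Submonoid.powers d) b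
  obtain ⟨k, hk⟩ := s.2
  have hk' : d ^ k = (s : A) := hk
  have hs' : b * algebraMap A (Localization.Away d) (d ^ k) =
      algebraMap A (Localization.Away d) a' := by rw [hk']; exact hs
  have key : algebraMap A (Localization.Away d) (d ^ k * a) =
      algebraMap A (Localization.Away d) ((p : A) ^ n * a') := by
    rw [map_mul, map_mul, hb, ← hs']
    push_cast
    ring
  obtain ⟨c, hc⟩ := (IsLocalization.eq_iff_exists (Submonoid.powers d)
    (Localization.Away d)).1 key
  obtain ⟨m, hm⟩ := c.2
  have hm' : d ^ m = (c : A) := hm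
  refine hdp (m + k) n a ⟨d ^ m * a', ?_⟩
  rw [pow_add, mul_assoc]
  calc d ^ m * (d ^ k * a) = c * (d ^ k * a) := by rw [hm']
  _ = c * ((p:A) ^ n * a') := hc
  _ = d ^ m * ((p:A) ^ n * a') := by rw [← hm']
  _ = (p:A) ^ n * (d ^ m * a') := by ring

end AuxLemmas

theorem aux_smul_top {B : Type*} [CommRing B] (p : ℕ) (n : ℕ) :
    ((Ideal.span {(p : B)}) ^ n • ⊤ : Submodule B B) = Ideal.span {(p : B) ^ n} := by
  rw [smul_eq_mul, Ideal.mul_top, Ideal.span_singleton_pow]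

theorem aux_val {R : Type*} [CommRing R] (I : Ideal R) (b : R) (n : ℕ) :
    (algebraMap R (AdicCompletion I R) b).val n =
      Ideal.Quotient.mk (I ^ n • ⊤ : Ideal R) b := rfl

theorem aux_cast_val {R : Type*} [CommRing R] (I : Ideal R) (q : ℕ) (n : ℕ) :
    ((q : AdicCompletion I R)).val n = (q : R ⧸ (I ^ n • ⊤ : Submodule R R)) := rfl

/-- An element of the `p`-adic completion whose first component vanishes is divisible
by `p`. -/
theorem aux_ker {B : Type*} [CommRing B] (p : ℕ)
    (x : AdicCompletion (Ideal.span {(p : B)}) B) (hx : x.val 1 = 0) :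
    x ∈ Ideal.span {(p : AdicCompletion (Ideal.span {(p : B)}) B)} := by
  obtain ⟨f, rfl⟩ := AdicCompletion.mk_surjective (Ideal.span {(p : B)}) B x
  have hIn := fun n => aux_smul_top (B := B) p n
  -- f 1 is divisible by p
  have h1 : (f : ℕ → B) 1 ∈ ((Ideal.span {(p : B)}) ^ 1 • ⊤ : Submodule B B) := by
    have := hx
    rw [AdicCompletion.mk_apply_coe, Submodule.mkQ_apply, Submodule.Quotient.mk_eq_zero] at this
    exact this
  obtain ⟨c0, hc0⟩ := Ideal.mem_span_singleton.1 ((hIn 1) ▸ h1)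
  rw [pow_one] at hc0
  -- successive differences are divisible by p^(n+1)
  have hstep : ∀ n : ℕ, ∃ cn, (f : ℕ → B) (n + 2) - (f : ℕ → B) (n + 1) =
      (p : B) ^ (n + 1) * cn := by
    intro n
    have := (f.property (Nat.le_succ (n + 1))).symm
    rw [SModEq.sub_mem, hIn (n + 1), Ideal.mem_span_singleton] at this
    exact this
  choose cs hcs using hstep
  set g : ℕ → B := fun n => c0 + ∑ i ∈ Finset.range n, (p : B) ^ i * cs i with hg
  have hpg : ∀ n, (p : B) * g n = (f : ℕ → B) (n + 1) := by
    intro n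
    have htel : ∑ i ∈ Finset.range n, ((f : ℕ → B) (i + 2) - (f : ℕ → B) (i + 1)) =
        (f : ℕ → B) (n + 1) - (f : ℕ → B) 1 :=
      Finset.sum_range_sub (fun i => (f : ℕ → B) (i + 1)) n
    have h5 : (p : B) * g n = (p : B) * c0 +
        ∑ i ∈ Finset.range n, (p : B) ^ (i + 1) * cs i := by
      rw [hg]; rw [mul_add, Finset.mul_sum]
      exact congrArg _ (Finset.sum_congr rfl fun i _ => by ring)
    rw [h5, ← hc0]
    calc (f:ℕ→B) 1 + ∑ i ∈ Finset.range n, (p:B)^(i+1) * cs i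
        = (f:ℕ→B) 1 + ∑ i ∈ Finset.range n, ((f:ℕ→B) (i+2) - (f:ℕ→B) (i+1)) := by
          exact congrArg _ (Finset.sum_congr rfl (fun i _ => (hcs i).symm))
      _ = (f:ℕ→B) (n+1) := by rw [htel]; ring
  -- g is an adic Cauchy sequence
  have hgc : ∀ n, g n ≡ g (n + 1) [SMOD ((Ideal.span {(p : B)}) ^ n • ⊤ : Submodule B B)] := by
    intro n
    rw [SModEq.sub_mem, hIn n]
    have h6 : g n - g (n + 1) = -((p : B) ^ n * cs n) := by
      rw [hg]; simp [Finset.sum_range_succ]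
    rw [h6]
    exact neg_mem (Ideal.mem_span_singleton.2 ⟨cs n, rfl⟩)
  refine Ideal.mem_span_singleton.2
    ⟨AdicCompletion.mk _ B (AdicCauchySequence.mk _ B g hgc), ?_⟩
  ext n
  rw [AdicCompletion.mk_apply_coe, Submodule.mkQ_apply]
  have hval : ((p : AdicCompletion (Ideal.span {(p : B)}) B) *
      AdicCompletion.mk _ B (AdicCauchySequence.mk _ B g hgc)).val n =
      (p : B ⧸ ((Ideal.span {(p : B)}) ^ n • ⊤ : Submodule B B)) *
        Submodule.Quotient.mk (g n) := rfl
  rw [hval]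
  have h7 : (p : B ⧸ ((Ideal.span {(p : B)}) ^ n • ⊤ : Submodule B B)) *
      Submodule.Quotient.mk (g n) = Submodule.Quotient.mk ((p : B) * g n) := by
    have h8 : (p : B ⧸ ((Ideal.span {(p : B)}) ^ n • ⊤ : Submodule B B)) =
        Ideal.Quotient.mk ((Ideal.span {(p : B)}) ^ n • ⊤ : Ideal B) (p : B) := by
      rw [map_natCast]
    rw [h8]
    rfl
  rw [h7, hpg n]
  exact f.property (Nat.le_succ n)

/-- The p-adic completion `C = (A[1/d])^∧_p = lim_n A[1/d]/pⁿA[1/d]` of the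
localization `A[1/d]`. -/
noncomputable abbrev PAdicCompletionOfAway (A : Type*) [CommRing A] (p : ℕ) (d : A) : Type _ :=
  AdicCompletion (Ideal.span {(p : Localization.Away d)}) (Localization.Away d)

/-!
Let A be a commutative ring, p a prime and d ∈ A.  Assume p and d are
nonzerodivisors on A, A/dA is p-torsion-free, and A is classically p-adically
complete.  Then the canonical ring homomorphism A → (A[1/d])^∧_p is injective,
and the reduction map A[1/d]/p·A[1/d] → (A[1/d])^∧_p / p·(A[1/d])^∧_p is an
isomorphism.
-/

theorem injective_to_completed_localization_and_bijective_mod_p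
    {A : Type*} [CommRing A] (p : ℕ) (hp : p.Prime) (d : A)
    (hpA : (p : A) ∈ nonZeroDivisors A) (hdA : d ∈ nonZeroDivisors A)
    (htf : ∀ x : A, (p : A) * x ∈ Ideal.span {d} → x ∈ Ideal.span {d})
    (hcomp : IsAdicComplete (Ideal.span {(p : A)}) A) :
    Function.Injective (fun a : A =>
      algebraMap (Localization.Away d) (PAdicCompletionOfAway A p d)
        (algebraMap A (Localization.Away d) a)) ∧
    Function.Bijective (Ideal.quotientMap
      (Ideal.span {(p : PAdicCompletionOfAway A p d)})
      (algebraMap (Localization.Away d) (PAdicCompletionOfAway A p d))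
      (show Ideal.span {(p : Localization.Away d)} ≤
          (Ideal.span {(p : PAdicCompletionOfAway A p d)}).comap
            (algebraMap (Localization.Away d) (PAdicCompletionOfAway A p d)) by
        rw [Ideal.span_le, Set.singleton_subset_iff, SetLike.mem_coe, Ideal.mem_comap,
          map_natCast]
        exact Ideal.mem_span_singleton_self _)) := by
  set B := Localization.Away d with hB
  set C := PAdicCompletionOfAway A p d with hC
  have hdp := aux_dpow_cancel p d hdA htf
  have hloc := aux_loc p d hdp
  constructor
  · -- injectivity
    intro a b hab
    have hsub : algebraMap B C (algebraMap A B (a - b)) = 0 := by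
      simp only [map_sub]
      rw [sub_eq_zero]
      exact hab
    have key : ∀ n : ℕ, (a - b) ≡ 0 [SMOD ((Ideal.span {(p : A)}) ^ n • ⊤ : Submodule A A)] := by
      intro n
      rw [SModEq.zero, aux_smul_top, Ideal.mem_span_singleton]
      refine hloc n (a - b) ?_
      have h0 : (algebraMap B C (algebraMap A B (a - b))).val n = 0 := by rw [hsub]; rfl
      rw [aux_val] at h0
      have := Ideal.Quotient.eq_zero_iff_mem.1 h0
      rw [aux_smul_top, Ideal.mem_span_singleton] at this
      exact this
    exact sub_eq_zero.1 (hcomp.haus' (a - b) key)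
  constructor
  · -- injectivity of the reduction map
    refine Ideal.quotientMap_injective' ?_
    intro b hb
    rw [Ideal.mem_comap, Ideal.mem_span_singleton] at hb
    obtain ⟨y, hy⟩ := hb
    obtain ⟨c, hc⟩ := Submodule.Quotient.mk_surjective _ (y.val 1)
    have h1 : (algebraMap B C b).val 1 = (p : C).val 1 * y.val 1 := by rw [hy]; rfl
    rw [aux_val, aux_cast_val, ← hc] at h1
    have h2 : (1 : ℕ) = 1 := rfl
    have h3 : Ideal.Quotient.mk ((Ideal.span {(p : B)}) ^ 1 • ⊤ : Ideal B) b =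
        Ideal.Quotient.mk ((Ideal.span {(p : B)}) ^ 1 • ⊤ : Ideal B) ((p : B) * c) := by
      rw [h1]
      rw [show ((p : B ⧸ ((Ideal.span {(p:B)}) ^ 1 • ⊤ : Submodule B B))) =
        Ideal.Quotient.mk ((Ideal.span {(p : B)}) ^ 1 • ⊤ : Ideal B) (p : B) from
        (map_natCast _ p).symm]
      rfl
    have h4 : b - (p : B) * c ∈ ((Ideal.span {(p : B)}) ^ 1 • ⊤ : Ideal B) :=
      Ideal.Quotient.eq.1 h3
    rw [aux_smul_top, pow_one] at h4
    have h5 : b = (b - (p : B) * c) + (p : B) * c := by ring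
    rw [h5]
    exact add_mem h4 (Ideal.mem_span_singleton.2 ⟨c, rfl⟩)
  · -- surjectivity of the reduction map
    intro y
    obtain ⟨x, rfl⟩ := Ideal.Quotient.mk_surjective y
    obtain ⟨f, rfl⟩ := AdicCompletion.mk_surjective (Ideal.span {(p : B)}) B x
    refine ⟨Ideal.Quotient.mk _ ((f : ℕ → B) 1), ?_⟩
    rw [Ideal.quotientMap_mk]
    rw [Ideal.Quotient.eq]
    refine aux_ker p _ ?_
    rw [AdicCompletion.val_sub]
    exact sub_self ((AdicCompletion.mk _ B f).val 1)
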